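/- Let N ≥ 1, T > 0, and let X : [0, T] × ℝ^N → ℝ^N be continuous and Lipschitz in the second variable with Lipschitz constant C_X uniformly in t. Let γ, μ : [0, T] → ℝ^N be C¹ functions with μ'(τ) = X(τ, μ(τ)) for all τ. Then for every t ∈ [0, T] with C_X · t ≤ 1/2 one has: sup_{0 ≤ τ ≤ t} |γ(τ) − μ(τ)| ≤ 2 |γ(0) − μ(0)| + 2 t^{1/2} ( ∫₀^t |γ'(τ) − X(τ, γ(τ))|² dτ )^{1/2}. -/

import Mathlib

open MeasureTheory Set

/-- Elementary Cauchy–Schwarz for interval integrals via AM–GM. -/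
lemma cs_aux {u : ℝ → ℝ} {b : ℝ} (hb : 0 ≤ b) (hu : ContinuousOn u (Icc 0 b))
    (hu0 : ∀ x ∈ Icc (0:ℝ) b, 0 ≤ u x) :
    ∫ σ in (0:ℝ)..b, u σ ≤ Real.sqrt b * Real.sqrt (∫ σ in (0:ℝ)..b, (u σ)^2) := by
  have hInt : IntervalIntegrable u volume 0 b :=
    hu.intervalIntegrable_of_Icc hb
  have hInt2 : IntervalIntegrable (fun σ => (u σ)^2) volume 0 b :=
    (hu.pow 2).intervalIntegrable_of_Icc hb
  set I := ∫ σ in (0:ℝ)..b, (u σ)^2 with hIdef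
  have hI0 : 0 ≤ I :=
    intervalIntegral.integral_nonneg hb (fun x hx => sq_nonneg _)
  have key : ∀ ε : ℝ, 0 < ε → (∫ σ in (0:ℝ)..b, u σ) ≤ I / (2*ε) + ε * b / 2 := by
    intro ε hε
    have hmono : (∫ σ in (0:ℝ)..b, u σ) ≤ ∫ σ in (0:ℝ)..b, ((u σ)^2 / (2*ε) + ε/2) := by
      apply intervalIntegral.integral_mono_on hb hInt
      · exact (hInt2.div_const _).add intervalIntegrable_const
      · intro x hx
        have h := sq_nonneg (u x - ε)
        have : u x ≤ (u x)^2 / (2*ε) + ε/2 := by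
          rw [div_add' _ _ _ (by positivity), le_div_iff₀ (by positivity)]
          nlinarith
        exact this
    rw [intervalIntegral.integral_add (hInt2.div_const _) intervalIntegrable_const,
        intervalIntegral.integral_div, intervalIntegral.integral_const] at hmono
    simp only [smul_eq_mul, sub_zero] at hmono
    calc (∫ σ in (0:ℝ)..b, u σ) ≤ I / (2*ε) + b * (ε/2) := hmono
      _ = I / (2*ε) + ε * b / 2 := by ring
  rcases eq_or_lt_of_le hI0 with hIz | hIpos
  · have h0 : (∫ σ in (0:ℝ)..b, u σ) ≤ 0 := by
      by_contra h
      push_neg at h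
      rcases eq_or_lt_of_le hb with hbz | hbpos
      · rw [← hbz, intervalIntegral.integral_same] at h; exact lt_irrefl _ h
      · have hk := key ((∫ σ in (0:ℝ)..b, u σ) / b) (by positivity)
        rw [← hIz] at hk
        simp only [zero_div] at hk
        rw [div_mul_eq_mul_div, mul_div_assoc, div_self (ne_of_gt hbpos)] at hk
        linarith
    calc (∫ σ in (0:ℝ)..b, u σ) ≤ 0 := h0
      _ ≤ _ := by positivity
  · have hbpos : 0 < b := by
      rcases eq_or_lt_of_le hb with hbz | hbpos
      · exfalso
        rw [← hbz, intervalIntegral.integral_same] at hIdef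
        rw [hIdef] at hIpos; exact lt_irrefl _ hIpos
      · exact hbpos
    have hsI : 0 < Real.sqrt I := Real.sqrt_pos.mpr hIpos
    have hsb : 0 < Real.sqrt b := Real.sqrt_pos.mpr hbpos
    have h1 : Real.sqrt I ^ 2 = I := Real.sq_sqrt hI0
    have h2 : Real.sqrt b ^ 2 = b := Real.sq_sqrt hb
    have hk := key (Real.sqrt I / Real.sqrt b) (by positivity)
    calc (∫ σ in (0:ℝ)..b, u σ)
        ≤ I / (2 * (Real.sqrt I / Real.sqrt b)) + (Real.sqrt I / Real.sqrt b) * b / 2 := hk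
      _ = Real.sqrt b * Real.sqrt I := by
          field_simp
          nlinarith
      _ = Real.sqrt b * Real.sqrt I := rfl

/-- Quantitative Gronwall-type estimate: if `μ` is an integral curve of `X` and
`γ` is any `C¹` curve, then for `C_X · t ≤ 1/2`,
`sup_{0≤τ≤t} |γ(τ) − μ(τ)| ≤ 2|γ(0) − μ(0)| + 2 t^{1/2} (∫₀ᵗ |γ' − X(τ,γ)|² dτ)^{1/2}`. -/
theorem stmt_2 (N : ℕ) (hN : 1 ≤ N) (T : ℝ) (hT : 0 < T)
    (X : ℝ → EuclideanSpace ℝ (Fin N) → EuclideanSpace ℝ (Fin N))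
    (hXcont : ContinuousOn (Function.uncurry X) (Icc 0 T ×ˢ univ))
    (CX : ℝ)
    (hXlip : ∀ t ∈ Icc (0:ℝ) T, ∀ x y : EuclideanSpace ℝ (Fin N),
      ‖X t x - X t y‖ ≤ CX * ‖x - y‖)
    (γ μ : ℝ → EuclideanSpace ℝ (Fin N))
    (hγ : ContDiff ℝ 1 γ) (hμ : ContDiff ℝ 1 μ)
    (hμODE : ∀ τ ∈ Icc (0:ℝ) T, HasDerivAt μ (X τ (μ τ)) τ) :
    ∀ t ∈ Icc (0:ℝ) T, CX * t ≤ 1 / 2 →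
      ∀ τ ∈ Icc (0:ℝ) t,
        ‖γ τ - μ τ‖ ≤ 2 * ‖γ 0 - μ 0‖ +
          2 * Real.sqrt t * Real.sqrt (∫ σ in (0:ℝ)..t, ‖deriv γ σ - X σ (γ σ)‖ ^ 2) := by
  intro t ht hCXt τ hτmem
  have ht0 : 0 ≤ t := ht.1
  have htT : t ≤ T := ht.2
  -- CX ≥ 0
  have hCX0 : 0 ≤ CX := by
    have h := hXlip 0 ⟨le_rfl, hT.le⟩ (EuclideanSpace.single (⟨0, hN⟩ : Fin N) (1:ℝ)) 0
    have hx : ‖(EuclideanSpace.single (⟨0, hN⟩ : Fin N) (1:ℝ)) - 0‖ = 1 := by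
      simp [EuclideanSpace.norm_single]
    rw [hx, mul_one] at h
    exact le_trans (norm_nonneg _) h
  have hγc : Continuous γ := hγ.continuous
  have hμc : Continuous μ := hμ.continuous
  have hγ' : Continuous (deriv γ) := hγ.continuous_deriv le_rfl
  have hXγ : ContinuousOn (fun σ => X σ (γ σ)) (Icc 0 T) :=
    hXcont.comp (continuous_id.prodMk hγc).continuousOn
      (fun σ hσ => ⟨hσ, mem_univ _⟩)
  have hXμ : ContinuousOn (fun σ => X σ (μ σ)) (Icc 0 T) :=
    hXcont.comp (continuous_id.prodMk hμc).continuousOn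
      (fun σ hσ => ⟨hσ, mem_univ _⟩)
  have h1c : ContinuousOn (fun σ => deriv γ σ - X σ (γ σ)) (Icc 0 T) :=
    hγ'.continuousOn.sub hXγ
  have h2c : ContinuousOn (fun σ => X σ (γ σ) - X σ (μ σ)) (Icc 0 T) :=
    hXγ.sub hXμ
  -- the max of ‖γ - μ‖ over [0, t]
  obtain ⟨τ₀, hτ₀mem, hmax⟩ := isCompact_Icc.exists_isMaxOn (nonempty_Icc.mpr ht0)
    ((hγc.sub hμc).norm.continuousOn (s := Icc 0 t))
  have hsub : Icc (0:ℝ) τ₀ ⊆ Icc 0 T :=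
    Icc_subset_Icc le_rfl (le_trans hτ₀mem.2 htT)
  have hτ₀0 : 0 ≤ τ₀ := hτ₀mem.1
  have hτ₀t : τ₀ ≤ t := hτ₀mem.2
  set M := ‖γ τ₀ - μ τ₀‖ with hMdef
  have hM0 : 0 ≤ M := norm_nonneg _
  -- FTC
  have hderiv : ∀ σ ∈ uIcc (0:ℝ) τ₀,
      HasDerivAt (fun s => γ s - μ s) (deriv γ σ - X σ (μ σ)) σ := by
    intro σ hσ
    rw [uIcc_of_le hτ₀0] at hσ
    exact ((hγ.differentiable one_ne_zero σ).hasDerivAt).sub (hμODE σ (hsub hσ))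
  have hInt12 : IntervalIntegrable (fun σ => deriv γ σ - X σ (μ σ)) volume 0 τ₀ :=
    ((hγ'.continuousOn.sub hXμ).mono hsub).intervalIntegrable_of_Icc hτ₀0
  have hInt1 : IntervalIntegrable (fun σ => deriv γ σ - X σ (γ σ)) volume 0 τ₀ :=
    (h1c.mono hsub).intervalIntegrable_of_Icc hτ₀0
  have hInt2 : IntervalIntegrable (fun σ => X σ (γ σ) - X σ (μ σ)) volume 0 τ₀ :=
    (h2c.mono hsub).intervalIntegrable_of_Icc hτ₀0
  have hFTC : (∫ σ in (0:ℝ)..τ₀, (deriv γ σ - X σ (μ σ)))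
      = (γ τ₀ - μ τ₀) - (γ 0 - μ 0) :=
    intervalIntegral.integral_eq_sub_of_hasDerivAt hderiv hInt12
  have hsplit : (∫ σ in (0:ℝ)..τ₀, (deriv γ σ - X σ (μ σ)))
      = (∫ σ in (0:ℝ)..τ₀, (deriv γ σ - X σ (γ σ)))
        + ∫ σ in (0:ℝ)..τ₀, (X σ (γ σ) - X σ (μ σ)) := by
    rw [← intervalIntegral.integral_add hInt1 hInt2]
    congr 1
    funext σ
    abel
  -- the three-term bound
  have htriangle : M ≤ ‖γ 0 - μ 0‖
      + ‖∫ σ in (0:ℝ)..τ₀, (deriv γ σ - X σ (γ σ))‖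
      + ‖∫ σ in (0:ℝ)..τ₀, (X σ (γ σ) - X σ (μ σ))‖ := by
    have : γ τ₀ - μ τ₀ = (γ 0 - μ 0)
        + ((∫ σ in (0:ℝ)..τ₀, (deriv γ σ - X σ (γ σ)))
          + ∫ σ in (0:ℝ)..τ₀, (X σ (γ σ) - X σ (μ σ))) := by
      rw [← hsplit, hFTC]; abel
    rw [hMdef, this]
    calc ‖(γ 0 - μ 0) + _‖ ≤ ‖γ 0 - μ 0‖ + ‖(∫ σ in (0:ℝ)..τ₀, (deriv γ σ - X σ (γ σ)))
          + ∫ σ in (0:ℝ)..τ₀, (X σ (γ σ) - X σ (μ σ))‖ := norm_add_le _ _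
      _ ≤ _ := by
        have := norm_add_le (∫ σ in (0:ℝ)..τ₀, (deriv γ σ - X σ (γ σ)))
          (∫ σ in (0:ℝ)..τ₀, (X σ (γ σ) - X σ (μ σ)))
        linarith
  -- bound on the first integral: Cauchy-Schwarz
  set I := ∫ σ in (0:ℝ)..t, ‖deriv γ σ - X σ (γ σ)‖^2 with hIdef
  have hI0 : 0 ≤ I := intervalIntegral.integral_nonneg ht0 (fun x hx => sq_nonneg _)
  have hb1 : ‖∫ σ in (0:ℝ)..τ₀, (deriv γ σ - X σ (γ σ))‖ ≤ Real.sqrt t * Real.sqrt I := by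
    have hstep1 : ‖∫ σ in (0:ℝ)..τ₀, (deriv γ σ - X σ (γ σ))‖
        ≤ ∫ σ in (0:ℝ)..τ₀, ‖deriv γ σ - X σ (γ σ)‖ :=
      intervalIntegral.norm_integral_le_integral_norm hτ₀0
    have hstep2 : (∫ σ in (0:ℝ)..τ₀, ‖deriv γ σ - X σ (γ σ)‖)
        ≤ Real.sqrt τ₀ * Real.sqrt (∫ σ in (0:ℝ)..τ₀, ‖deriv γ σ - X σ (γ σ)‖^2) :=
      cs_aux hτ₀0 ((h1c.mono hsub).norm) (fun x hx => norm_nonneg _)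
    have hmonoI : (∫ σ in (0:ℝ)..τ₀, ‖deriv γ σ - X σ (γ σ)‖^2) ≤ I := by
      apply intervalIntegral.integral_mono_interval le_rfl hτ₀0 hτ₀t
      · exact Filter.Eventually.of_forall (fun x => sq_nonneg _)
      · exact ((h1c.mono (Icc_subset_Icc le_rfl htT)).norm.pow 2).intervalIntegrable_of_Icc ht0
    calc ‖∫ σ in (0:ℝ)..τ₀, (deriv γ σ - X σ (γ σ))‖
        ≤ Real.sqrt τ₀ * Real.sqrt (∫ σ in (0:ℝ)..τ₀, ‖deriv γ σ - X σ (γ σ)‖^2) :=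
          le_trans hstep1 hstep2
      _ ≤ Real.sqrt t * Real.sqrt I := by
          apply mul_le_mul (Real.sqrt_le_sqrt hτ₀t) (Real.sqrt_le_sqrt hmonoI)
            (Real.sqrt_nonneg _) (Real.sqrt_nonneg _)
  -- bound on the second integral
  have hb2 : ‖∫ σ in (0:ℝ)..τ₀, (X σ (γ σ) - X σ (μ σ))‖ ≤ M / 2 := by
    have hstep1 : ‖∫ σ in (0:ℝ)..τ₀, (X σ (γ σ) - X σ (μ σ))‖
        ≤ ∫ σ in (0:ℝ)..τ₀, ‖X σ (γ σ) - X σ (μ σ)‖ :=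
      intervalIntegral.norm_integral_le_integral_norm hτ₀0
    have hstep2 : (∫ σ in (0:ℝ)..τ₀, ‖X σ (γ σ) - X σ (μ σ)‖)
        ≤ ∫ σ in (0:ℝ)..τ₀, CX * M := by
      apply intervalIntegral.integral_mono_on hτ₀0
        ((h2c.mono hsub).norm.intervalIntegrable_of_Icc hτ₀0)
        intervalIntegrable_const
      intro x hx
      have hxT : x ∈ Icc (0:ℝ) T := hsub hx
      have hlip := hXlip x hxT (γ x) (μ x)
      have hmx : ‖γ x - μ x‖ ≤ M := hmax (Icc_subset_Icc le_rfl hτ₀t hx)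
      calc ‖X x (γ x) - X x (μ x)‖ ≤ CX * ‖γ x - μ x‖ := hlip
        _ ≤ CX * M := mul_le_mul_of_nonneg_left hmx hCX0
    rw [intervalIntegral.integral_const, smul_eq_mul, sub_zero] at hstep2
    have hfinal : τ₀ * (CX * M) ≤ M / 2 := by
      have h1 : CX * τ₀ ≤ CX * t := mul_le_mul_of_nonneg_left hτ₀t hCX0
      have h2 : CX * τ₀ * M ≤ (1/2) * M :=
        mul_le_mul_of_nonneg_right (le_trans h1 hCXt) hM0
      nlinarith
    linarith
  -- combine
  have hMle : M ≤ 2 * ‖γ 0 - μ 0‖ + 2 * Real.sqrt t * Real.sqrt I := by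
    have hs : 0 ≤ Real.sqrt t * Real.sqrt I := by positivity
    linarith
  calc ‖γ τ - μ τ‖ ≤ M := hmax hτmem
    _ ≤ _ := hMle
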